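/- Let a be a finite-dimensional nilpotent associative algebra over F_q, λ ∈ a*, and p ⊆ a a maximal isotropic subspace for B_λ(x,y) = λ(xy−yx) that is an associative subalgebra with λ(p²) = 0. Then the index of P = 1 + p in G = 1 + a satisfies [G : P] = q^((dim a − dim g^λ)/2), i.e., [G : P]² equals the size of the coadjoint orbit of λ. -/

import Mathlib

open Unitization Module

set_option linter.unusedSectionVars false
set_option maxHeartbeats 1000000


theorem aux_lagrangian {F V : Type*} [Field F] [AddCommGroup V] [Module F V]
    [FiniteDimensional F V]
    (B : V →ₗ[F] V →ₗ[F] F) (halt : ∀ x, B x x = 0)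
    (glam p : Submodule F V)
    (hglam : ∀ x, x ∈ glam ↔ ∀ y, B x y = 0)
    (hiso : ∀ x ∈ p, ∀ y ∈ p, B x y = 0)
    (hmax : ∀ p' : Submodule F V, (∀ x ∈ p', ∀ y ∈ p', B x y = 0) → p ≤ p' → p' = p) :
    glam ≤ p ∧ 2 * finrank F p = finrank F V + finrank F glam := by
  have hskew : ∀ x y, B x y = - B y x := by
    intro x y
    have h := halt (x + y)
    simp only [map_add, LinearMap.add_apply, halt] at h
    linear_combination h
  -- glam ≤ p
  have hgp : glam ≤ p := by
    have hsup : ∀ x ∈ p ⊔ glam, ∀ y ∈ p ⊔ glam, B x y = 0 := by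
      intro x hx y hy
      obtain ⟨x1, hx1, x2, hx2, rfl⟩ := Submodule.mem_sup.mp hx
      obtain ⟨y1, hy1, y2, hy2, rfl⟩ := Submodule.mem_sup.mp hy
      have h2 : ∀ w, B x2 w = 0 := (hglam x2).mp hx2
      have h2' : ∀ w, B w y2 = 0 := fun w => by
        rw [hskew, (hglam y2).mp hy2, neg_zero]
      simp only [map_add, LinearMap.add_apply, h2, h2', hiso x1 hx1 y1 hy1]
      ring
    have := hmax (p ⊔ glam) hsup le_sup_left
    exact le_trans le_sup_right this.le
  -- maximality: p is its own orthogonal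
  have horth : ∀ x, (∀ y ∈ p, B x y = 0) → x ∈ p := by
    intro x hx
    have hsup : ∀ u ∈ p ⊔ F ∙ x, ∀ v ∈ p ⊔ F ∙ x, B u v = 0 := by
      intro u hu v hv
      obtain ⟨u1, hu1, u2, hu2, rfl⟩ := Submodule.mem_sup.mp hu
      obtain ⟨v1, hv1, v2, hv2, rfl⟩ := Submodule.mem_sup.mp hv
      obtain ⟨c, rfl⟩ := Submodule.mem_span_singleton.mp hu2
      obtain ⟨d, rfl⟩ := Submodule.mem_span_singleton.mp hv2
      have hxu1 : B x u1 = 0 := hx u1 hu1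
      have hxv1 : B x v1 = 0 := hx v1 hv1
      have hu1x : B u1 x = 0 := by rw [hskew, hxu1, neg_zero]
      simp only [map_add, map_smul, LinearMap.add_apply, LinearMap.smul_apply,
        LinearMap.map_smul, hiso u1 hu1 v1 hv1, hxv1, hu1x, halt, smul_zero]
      simp
    have hp' := hmax (p ⊔ F ∙ x) hsup le_sup_left
    have hxmem : x ∈ p ⊔ F ∙ x :=
      Submodule.mem_sup_right (Submodule.mem_span_singleton_self x)
    rwa [hp'] at hxmem
  -- ψ : V →ₗ Dual V
  have hkerψ : LinearMap.ker B = glam := by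
    ext x
    simp only [LinearMap.mem_ker, hglam]
    constructor
    · intro h y; rw [h]; rfl
    · intro h; ext y; exact h y
  have hrangeψ : LinearMap.range B = glam.dualAnnihilator := by
    apply Submodule.eq_of_le_of_finrank_eq
    · rintro f ⟨x, rfl⟩
      rw [Submodule.mem_dualAnnihilator]
      intro w hw
      rw [hskew, (hglam w).mp hw, neg_zero]
    · have h1 := LinearMap.finrank_range_add_finrank_ker B
      rw [hkerψ] at h1
      have h2 : finrank F (V ⧸ glam) = finrank F glam.dualAnnihilator :=
        (Subspace.quotEquivAnnihilator glam).finrank_eq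
      have h3 := glam.finrank_quotient_add_finrank
      rw [← h2]
      omega
  -- φ : V →ₗ Dual p
  set glam' : Submodule F p := glam.comap p.subtype with hglam'
  set φ : V →ₗ[F] Module.Dual F p := B.compl₂ p.subtype with hφ
  have hφ_apply : ∀ x (y : p), φ x y = B x y := fun x y => rfl
  have hkerφ : LinearMap.ker φ = p := by
    ext x
    simp only [LinearMap.mem_ker]
    constructor
    · intro h
      apply horth
      intro y hy
      have := congrArg (fun f => f ⟨y, hy⟩) h
      simpa [hφ_apply] using this
    · intro hx
      ext y
      exact hiso x hx y y.2
  have hrangeφ : LinearMap.range φ = glam'.dualAnnihilator := by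
    apply le_antisymm
    · rintro f ⟨x, rfl⟩
      rw [Submodule.mem_dualAnnihilator]
      rintro ⟨w, hwp⟩ hw
      have hwg : w ∈ glam := hw
      rw [hφ_apply, hskew, (hglam w).mp hwg, neg_zero]
    · intro f hf
      rw [Submodule.mem_dualAnnihilator] at hf
      obtain ⟨W, hW⟩ := p.exists_isCompl
      set Ftilde : Module.Dual F V := f ∘ₗ (p.projectionOnto W hW) with hFt
      have hFt_ann : Ftilde ∈ glam.dualAnnihilator := by
        rw [Submodule.mem_dualAnnihilator]
        intro w hw
        have hwp : w ∈ p := hgp hw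
        have : p.projectionOnto W hW w = ⟨w, hwp⟩ :=
          Submodule.linearProjOfIsCompl_apply_left hW ⟨w, hwp⟩
        simp only [hFt, LinearMap.comp_apply, this]
        exact hf ⟨w, hwp⟩ hw
      rw [← hrangeψ] at hFt_ann
      obtain ⟨x, hx⟩ := hFt_ann
      refine ⟨x, ?_⟩
      ext y
      have : B x y = Ftilde y := by rw [← hx]
      rw [hφ_apply, this, hFt, LinearMap.comp_apply,
        Submodule.linearProjOfIsCompl_apply_left hW y]
  -- dimension count
  have e1 := LinearMap.finrank_range_add_finrank_ker φ
  rw [hkerφ, hrangeφ] at e1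
  have e2 : finrank F glam' = finrank F glam :=
    (Submodule.comapSubtypeEquivOfLe hgp).finrank_eq
  have e3 : finrank F (p ⧸ glam') = finrank F glam'.dualAnnihilator :=
    (Subspace.quotEquivAnnihilator glam').finrank_eq
  have e4 := glam'.finrank_quotient_add_finrank
  exact ⟨hgp, by omega⟩

variable {F : Type*} [Field F] [Fintype F]
  (a : Type*) [NonUnitalRing a] [Module F a] [SMulCommClass F a a] [IsScalarTower F a a]

/-- The coadjoint action `(Ad*(g)λ)(x) = λ(g⁻¹ x g)`. -/
noncomputable def coAd (g : (Unitization F a)ˣ) (l : Module.Dual F a) : Module.Dual F a :=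
  l ∘ₗ (sndHom F F a) ∘ₗ (LinearMap.mulRight F ((g : Unitization F a))) ∘ₗ
    (LinearMap.mulLeft F (((g⁻¹ : (Unitization F a)ˣ) : Unitization F a))) ∘ₗ (inrHom F F a)

variable {a}

lemma exists_iff_fst (u : Unitization F a) : (∃ x : a, u = 1 + inr x) ↔ u.fst = 1 := by
  constructor
  · rintro ⟨x, rfl⟩; simp
  · intro h
    refine ⟨u.snd, ?_⟩
    conv_lhs => rw [← inl_fst_add_inr_snd_eq u]
    rw [h, inl_one]

lemma coAd_apply (g : (Unitization F a)ˣ) (l : Module.Dual F a) (x : a) :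
    coAd a g l x = l ((((g⁻¹ : (Unitization F a)ˣ) : Unitization F a) * inr x *
      (g : Unitization F a)).snd) := rfl

lemma inr_snd_eq (u : Unitization F a) (h : u.fst = 0) : inr u.snd = u := by
  conv_rhs => rw [← inl_fst_add_inr_snd_eq u]
  rw [h, inl_zero, zero_add]

lemma coAd_mul (g h : (Unitization F a)ˣ) (l : Module.Dual F a) :
    coAd a (g * h) l = coAd a g (coAd a h l) := by
  ext x
  rw [coAd_apply, coAd_apply, coAd_apply]
  rw [inr_snd_eq _ (by simp), mul_inv_rev, Units.val_mul, Units.val_mul]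
  simp only [mul_assoc]

lemma coAd_one (l : Module.Dual F a) : coAd a 1 l = l := by
  ext x
  rw [coAd_apply]
  simp

lemma fst_inv_eq_one (g : (Unitization F a)ˣ) (hg : ((g : Unitization F a)).fst = 1) :
    (((g⁻¹ : (Unitization F a)ˣ)) : Unitization F a).fst = 1 := by
  have h := congrArg (fun u : Unitization F a => u.fst) g.mul_inv
  simp only [Unitization.fst_mul, Unitization.fst_one, hg, one_mul] at h
  exact h

lemma coAd_fixed_iff (lam : Module.Dual F a) (glam : Submodule F a)
    (hglam : ∀ x : a, x ∈ glam ↔ ∀ y : a, lam (x * y - y * x) = 0)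
    (g : (Unitization F a)ˣ) (hg : ((g : Unitization F a)).fst = 1) :
    coAd a g lam = lam ↔ ((g : Unitization F a)).snd ∈ glam := by
  have hginv : (((g⁻¹ : (Unitization F a)ˣ)) : Unitization F a).fst = 1 :=
    fst_inv_eq_one g hg
  set x : a := ((g : Unitization F a)).snd with hxdef
  set z : a := (((g⁻¹ : (Unitization F a)ˣ)) : Unitization F a).snd with hzdef
  have hgeq : (g : Unitization F a) = 1 + inr x := by
    conv_lhs => rw [← inl_fst_add_inr_snd_eq (g : Unitization F a)]
    rw [hg, inl_one]
  have hzeq : ((g⁻¹ : (Unitization F a)ˣ) : Unitization F a) = 1 + inr z := by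
    conv_lhs => rw [← inl_fst_add_inr_snd_eq ((g⁻¹ : (Unitization F a)ˣ) : Unitization F a)]
    rw [hginv, inl_one]
  have hA : z + x + x * z = 0 := by
    have h := g.mul_inv
    rw [hgeq, hzeq] at h
    have h2 := congrArg (fun u : Unitization F a => u.snd) h
    simp only [Unitization.snd_mul, Unitization.snd_add, Unitization.snd_one,
      Unitization.snd_inr, Unitization.fst_add, Unitization.fst_one, Unitization.fst_inr,
      add_zero, zero_add, one_smul] at h2
    rw [← h2]
  have hB : x + z + z * x = 0 := by
    have h := g.inv_mul
    rw [hgeq, hzeq] at h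
    have h2 := congrArg (fun u : Unitization F a => u.snd) h
    simp only [Unitization.snd_mul, Unitization.snd_add, Unitization.snd_one,
      Unitization.snd_inr, Unitization.fst_add, Unitization.fst_one, Unitization.fst_inr,
      add_zero, zero_add, one_smul] at h2
    rw [← h2]
  have hsnd : ∀ u : a,
      ((((g⁻¹ : (Unitization F a)ˣ)) : Unitization F a) * inr u * (g : Unitization F a)).snd
        = (u + z * u) + (u + z * u) * x := by
    intro u
    rw [hgeq, hzeq]
    simp only [Unitization.snd_mul, Unitization.snd_add, Unitization.snd_one,
      Unitization.snd_inr, Unitization.fst_add, Unitization.fst_one, Unitization.fst_inr,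
      Unitization.fst_mul, add_zero, zero_add, one_smul, zero_smul, mul_one, one_mul,
      smul_add]
  have key : ∀ u : a, ((u + z * u) + (u + z * u) * x) - u
      = ((u + z * u) * x - x * (u + z * u)) + (z + x + x * z) * u := by
    intro u
    simp only [add_mul, mul_add, mul_assoc]
    abel
  have key' : ∀ u : a, ((u + z * u) + (u + z * u) * x) - u
      = (u + z * u) * x - x * (u + z * u) := by
    intro u
    rw [key u, hA, zero_mul, add_zero]
  have hcond : coAd a g lam = lam ↔
      ∀ u : a, lam ((u + z * u) * x - x * (u + z * u)) = 0 := by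
    rw [LinearMap.ext_iff]
    constructor
    · intro h u
      have hu := h u
      rw [coAd_apply, hsnd] at hu
      rw [← key', map_sub, hu, sub_self]
    · intro h u
      rw [coAd_apply, hsnd]
      have := h u
      rw [← key', map_sub, sub_eq_zero] at this
      exact this
  rw [hcond, hglam]
  constructor
  · intro h y
    have hv : (y + x * y) + z * (y + x * y) = y := by
      have : z * (y + x * y) = z * y + z * (x * y) := by rw [mul_add]
      rw [this]
      have hBy : (x + z + z * x) * y = 0 := by rw [hB, zero_mul]
      simp only [add_mul, mul_assoc] at hBy
      calc y + x * y + (z * y + z * (x * y)) = y + (x * y + z * y + z * (x * y)) := by abel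
        _ = y + 0 := by rw [hBy]
        _ = y := add_zero y
    have h2 := h (y + x * y)
    rw [hv] at h2
    have : lam (x * y - y * x) = - lam (y * x - x * y) := by
      rw [← map_neg, neg_sub]
    rw [this, h2, neg_zero]
  · intro h u
    have : lam ((u + z * u) * x - x * (u + z * u)) =
        - lam (x * (u + z * u) - (u + z * u) * x) := by rw [← map_neg, neg_sub]
    rw [this, h (u + z * u), neg_zero]

variable (a)

/-- For a finite-dimensional nilpotent associative algebra `a` over `F_q`, `λ ∈ a*`, and
`p` a maximal isotropic subspace for `B_λ` that is an associative subalgebra with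
`λ(p²) = 0`, the index of `P = 1 + p` in `G = 1 + a` is `q^((dim a − dim g^λ)/2)`,
and its square is the cardinality of the coadjoint orbit of `λ`. -/
theorem stmt17 [FiniteDimensional F a]
    (hnil : ∃ n : ℕ, 0 < n ∧ ∀ f : Fin n → a,
      (List.ofFn (fun i => (inr (f i) : Unitization F a))).prod = 0)
    (lam : Module.Dual F a)
    (glam : Submodule F a)
    (hglam : ∀ x : a, x ∈ glam ↔ ∀ y : a, lam (x * y - y * x) = 0)
    (p : Submodule F a)
    (hpmul : ∀ x ∈ p, ∀ y ∈ p, x * y ∈ p)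
    (hp2 : ∀ x ∈ p, ∀ y ∈ p, lam (x * y) = 0)
    (hiso : ∀ x ∈ p, ∀ y ∈ p, lam (x * y - y * x) = 0)
    (hmax : ∀ p' : Submodule F a,
      (∀ x ∈ p', ∀ y ∈ p', lam (x * y - y * x) = 0) → p ≤ p' → p' = p) :
    Nat.card {u : Unitization F a | ∃ x : a, u = 1 + inr x}
        / Nat.card {u : Unitization F a | ∃ x ∈ p, u = 1 + inr x}
      = Fintype.card F ^ ((finrank F a - finrank F glam) / 2) ∧
    (Nat.card {u : Unitization F a | ∃ x : a, u = 1 + inr x}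
        / Nat.card {u : Unitization F a | ∃ x ∈ p, u = 1 + inr x}) ^ 2
      = Nat.card {mu : Module.Dual F a |
          ∃ g : (Unitization F a)ˣ, (∃ x : a, (g : Unitization F a) = 1 + inr x) ∧
            coAd a g lam = mu} := by
  classical
  have hfin : Finite a := Module.finite_of_finite F
  let B : a →ₗ[F] a →ₗ[F] F := LinearMap.mk₂ F (fun x y => lam (x * y - y * x))
    (fun m m' n => by rw [← map_add]; congr 1; simp only [add_mul, mul_add]; abel)
    (fun c m n => by
      rw [← map_smul]; congr 1; simp only [smul_mul_assoc, mul_smul_comm, smul_sub])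
    (fun m n n' => by rw [← map_add]; congr 1; simp only [add_mul, mul_add]; abel)
    (fun c m n => by
      rw [← map_smul]; congr 1; simp only [smul_mul_assoc, mul_smul_comm, smul_sub])
  have hB : ∀ x y, B x y = lam (x * y - y * x) := fun x y => rfl
  obtain ⟨hgp, hdim⟩ := aux_lagrangian B (fun x => by rw [hB, sub_self, map_zero]) glam p
    (fun x => hglam x) (fun x hx y hy => hiso x hx y hy)
    (fun p' hp' hle => hmax p' (fun x hx y hy => hp' x hx y hy) hle)
  set q := Fintype.card F with hq
  set da := finrank F a with hda
  set dp := finrank F p with hdp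
  set dg := finrank F glam with hdg
  have hdple : dp ≤ da := Submodule.finrank_le p
  have hdgle : dg ≤ dp := Submodule.finrank_mono hgp
  have hqpos : 0 < q := Fintype.card_pos
  haveI : Fintype a := Fintype.ofFinite a
  have hcard_a : Nat.card a = q ^ da := by
    rw [Nat.card_eq_fintype_card, card_eq_pow_finrank (K := F) (V := a)]
  haveI : Fintype p := Fintype.ofFinite p
  have hcard_p : Nat.card p = q ^ dp := by
    rw [Nat.card_eq_fintype_card, card_eq_pow_finrank (K := F) (V := p)]
  have hcardGset : Nat.card {u : Unitization F a | ∃ x : a, u = 1 + inr x} = q ^ da := by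
    rw [← hcard_a]
    refine (Nat.card_eq_of_bijective (fun x : a =>
      (⟨1 + inr x, ⟨x, rfl⟩⟩ : {u : Unitization F a | ∃ x : a, u = 1 + inr x})) ⟨?_, ?_⟩).symm
    · intro x y hxy
      have h := congrArg Subtype.val hxy
      simp only at h
      exact inr_injective (add_left_cancel h)
    · rintro ⟨u, x, rfl⟩
      exact ⟨x, rfl⟩
  have hcardPset :
      Nat.card {u : Unitization F a | ∃ x ∈ p, u = 1 + inr x} = q ^ dp := by
    rw [← hcard_p]
    refine (Nat.card_eq_of_bijective (fun x : p =>
      (⟨1 + inr (x : a), ⟨(x : a), x.2, rfl⟩⟩ :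
        {u : Unitization F a | ∃ x ∈ p, u = 1 + inr x})) ⟨?_, ?_⟩).symm
    · intro x y hxy
      have h := congrArg Subtype.val hxy
      simp only at h
      exact Subtype.ext (inr_injective (add_left_cancel h))
    · rintro ⟨u, x, hx, rfl⟩
      exact ⟨⟨x, hx⟩, rfl⟩
  have hunit : ∀ x : a, IsUnit (1 + (inr x : Unitization F a)) := by
    obtain ⟨n, hn, hf⟩ := hnil
    intro x
    have hx : (inr x : Unitization F a) ^ n = 0 := by
      have h := hf (fun _ => x)
      rwa [List.ofFn_const, List.prod_replicate] at h
    exact IsNilpotent.isUnit_one_add ⟨n, hx⟩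
  have hufst : ∀ x : a, (((hunit x).unit : Unitization F a)).fst = 1 := by
    intro x
    rw [IsUnit.unit_spec]
    simp
  have husnd : ∀ x : a, (((hunit x).unit : Unitization F a)).snd = x := by
    intro x
    rw [IsUnit.unit_spec]
    simp
  let Gsub : Subgroup (Unitization F a)ˣ :=
    { carrier := {g | ((g : Unitization F a)).fst = 1}
      one_mem' := by simp
      mul_mem' := by
        intro g h hg hh
        show (((g * h : (Unitization F a)ˣ) : Unitization F a)).fst = 1
        rw [Units.val_mul, Unitization.fst_mul, hg, hh, one_mul]
      inv_mem' := by
        intro g hg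
        exact fst_inv_eq_one g hg }
  let S : Subgroup (Unitization F a)ˣ :=
    { carrier := {g | ((g : Unitization F a)).fst = 1 ∧ coAd a g lam = lam}
      one_mem' := ⟨by simp, coAd_one lam⟩
      mul_mem' := by
        rintro g h ⟨hg1, hg2⟩ ⟨hh1, hh2⟩
        refine ⟨?_, ?_⟩
        · show (((g * h : (Unitization F a)ˣ) : Unitization F a)).fst = 1
          rw [Units.val_mul, Unitization.fst_mul, hg1, hh1, one_mul]
        · rw [coAd_mul, hh2, hg2]
      inv_mem' := by
        rintro g ⟨hg1, hg2⟩
        refine ⟨fst_inv_eq_one g hg1, ?_⟩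
        calc coAd a g⁻¹ lam = coAd a g⁻¹ (coAd a g lam) := by rw [hg2]
          _ = coAd a (g⁻¹ * g) lam := (coAd_mul _ _ _).symm
          _ = lam := by rw [inv_mul_cancel, coAd_one] }
  let H : Subgroup Gsub := S.subgroupOf Gsub
  have hcardG : Nat.card Gsub = q ^ da := by
    rw [← hcard_a]
    refine (Nat.card_eq_of_bijective
      (fun x : a => (⟨(hunit x).unit, hufst x⟩ : Gsub)) ⟨?_, ?_⟩).symm
    · intro x y hxy
      have h := congrArg
        (fun g : Gsub => ((g : (Unitization F a)ˣ) : Unitization F a).snd) hxy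
      simpa only [husnd] using h
    · rintro ⟨g, hg⟩
      refine ⟨((g : Unitization F a)).snd, ?_⟩
      apply Subtype.ext
      apply Units.ext
      rw [IsUnit.unit_spec]
      conv_rhs => rw [← inl_fst_add_inr_snd_eq (g : Unitization F a)]
      have hg' : ((g : Unitization F a)).fst = 1 := hg
      rw [hg', inl_one]
  haveI : Fintype glam := Fintype.ofFinite glam
  have hcard_g : Nat.card glam = q ^ dg := by
    rw [Nat.card_eq_fintype_card, card_eq_pow_finrank (K := F) (V := glam)]
  have hcardH : Nat.card H = q ^ dg := by
    rw [← hcard_g]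
    have hmem : ∀ x : glam, (⟨(hunit x).unit, hufst x⟩ : Gsub) ∈ H := by
      intro x
      rw [Subgroup.mem_subgroupOf]
      refine ⟨hufst (x : a), ?_⟩
      rw [coAd_fixed_iff lam glam hglam _ (hufst (x : a)), husnd]
      exact x.2
    refine (Nat.card_eq_of_bijective
      (fun x : glam => (⟨⟨(hunit x).unit, hufst x⟩, hmem x⟩ : H)) ⟨?_, ?_⟩).symm
    · intro x y hxy
      have h := congrArg
        (fun g : H => (((g : Gsub) : (Unitization F a)ˣ) : Unitization F a).snd) hxy
      simp only [husnd] at h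
      exact Subtype.ext h
    · rintro ⟨⟨g, hgG⟩, hgH⟩
      rw [Subgroup.mem_subgroupOf] at hgH
      obtain ⟨hg1, hg2⟩ := hgH
      have hsndg : ((g : Unitization F a)).snd ∈ glam :=
        (coAd_fixed_iff lam glam hglam g hg1).mp hg2
      refine ⟨⟨((g : Unitization F a)).snd, hsndg⟩, ?_⟩
      apply Subtype.ext
      apply Subtype.ext
      apply Units.ext
      rw [IsUnit.unit_spec]
      conv_rhs => rw [← inl_fst_add_inr_snd_eq (g : Unitization F a)]
      rw [hg1, inl_one]
  have hcardO : Nat.card {mu : Module.Dual F a |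
      ∃ g : (Unitization F a)ˣ, (∃ x : a, (g : Unitization F a) = 1 + inr x) ∧
        coAd a g lam = mu} = Nat.card (Gsub ⧸ H) := by
    have hOmem : ∀ g : Gsub, coAd a (g : (Unitization F a)ˣ) lam ∈
        {mu : Module.Dual F a | ∃ g : (Unitization F a)ˣ,
          (∃ x : a, (g : Unitization F a) = 1 + inr x) ∧ coAd a g lam = mu} := by
      intro g
      exact ⟨(g : (Unitization F a)ˣ), (exists_iff_fst _).mpr g.2, rfl⟩
    have hresp : ∀ g g' : Gsub, (QuotientGroup.leftRel H) g g' →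
        coAd a (g : (Unitization F a)ˣ) lam = coAd a (g' : (Unitization F a)ˣ) lam := by
      intro g g' hr
      have hmem := QuotientGroup.leftRel_apply.mp hr
      rw [Subgroup.mem_subgroupOf] at hmem
      obtain ⟨_, hfix⟩ := hmem
      have hco : (((g⁻¹ * g' : Gsub) : (Unitization F a)ˣ)) =
          (g : (Unitization F a)ˣ)⁻¹ * (g' : (Unitization F a)ˣ) := rfl
      rw [hco] at hfix
      calc coAd a (g : (Unitization F a)ˣ) lam
          = coAd a (g : (Unitization F a)ˣ)
              (coAd a ((g : (Unitization F a)ˣ)⁻¹ * (g' : (Unitization F a)ˣ)) lam) := by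
            rw [hfix]
        _ = coAd a ((g : (Unitization F a)ˣ) *
              ((g : (Unitization F a)ˣ)⁻¹ * (g' : (Unitization F a)ˣ))) lam :=
            (coAd_mul _ _ _).symm
        _ = coAd a (g' : (Unitization F a)ˣ) lam := by rw [mul_inv_cancel_left]
    refine Nat.card_eq_of_bijective (fun q' => Quotient.liftOn' q'
      (fun g : Gsub => (⟨coAd a (g : (Unitization F a)ˣ) lam, hOmem g⟩ :
        {mu : Module.Dual F a | ∃ g : (Unitization F a)ˣ,
          (∃ x : a, (g : Unitization F a) = 1 + inr x) ∧ coAd a g lam = mu}))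
      (fun g g' hr => Subtype.ext (hresp g g' hr)) ) ⟨?_, ?_⟩ |>.symm
    · intro q1 q2
      refine Quotient.inductionOn₂' q1 q2 (fun g g' h => ?_)
      have hval := congrArg Subtype.val h
      simp only [Quotient.liftOn'_mk''] at hval
      apply Quotient.sound'
      apply QuotientGroup.leftRel_apply.mpr
      rw [Subgroup.mem_subgroupOf]
      have hco : (((g⁻¹ * g' : Gsub) : (Unitization F a)ˣ)) =
          (g : (Unitization F a)ˣ)⁻¹ * (g' : (Unitization F a)ˣ) := rfl
      constructor
      · show ((((g⁻¹ * g' : Gsub) : (Unitization F a)ˣ)) : Unitization F a).fst = 1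
        rw [hco, Units.val_mul, Unitization.fst_mul, fst_inv_eq_one _ g.2, g'.2.out, one_mul]
      · show coAd a (((g⁻¹ * g' : Gsub) : (Unitization F a)ˣ)) lam = lam
        rw [hco]
        calc coAd a ((g : (Unitization F a)ˣ)⁻¹ * (g' : (Unitization F a)ˣ)) lam
            = coAd a (g : (Unitization F a)ˣ)⁻¹
                (coAd a (g' : (Unitization F a)ˣ) lam) := coAd_mul _ _ _
          _ = coAd a (g : (Unitization F a)ˣ)⁻¹
                (coAd a (g : (Unitization F a)ˣ) lam) := by rw [hval]
          _ = coAd a ((g : (Unitization F a)ˣ)⁻¹ * (g : (Unitization F a)ˣ)) lam :=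
              (coAd_mul _ _ _).symm
          _ = lam := by rw [inv_mul_cancel, coAd_one]
    · rintro ⟨mu, g0, hx, rfl⟩
      refine ⟨Quotient.mk'' ⟨g0, (exists_iff_fst _).mp hx⟩, ?_⟩
      simp only [Quotient.liftOn'_mk'']
  have hlag := Subgroup.card_eq_card_quotient_mul_card_subgroup H
  rw [hcardG, hcardH] at hlag
  have hOq : Nat.card (Gsub ⧸ H) = q ^ (da - dg) := by
    refine Nat.eq_of_mul_eq_mul_right (pow_pos hqpos dg) ?_
    rw [← hlag, ← pow_add]
    congr 1
    omega
  rw [hcardGset, hcardPset]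
  constructor
  · rw [Nat.pow_div hdple hqpos]
    congr 1
    omega
  · rw [Nat.pow_div hdple hqpos, hcardO, hOq, ← pow_mul]
    congr 1
    omega
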